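/- Let q ≥ 2, δ = q² + q + 1, and let D ⊆ ℤ/δℤ be a based difference set of order q (so 0 ∈ D, |D| = q + 1, and the off-diagonal difference map D × D → ℤ/δℤ is a bijection onto the nonzero elements). Let G be the group given by the presentation with generators a_d for d ∈ D and relators a_0 together with a_x · a_y⁻¹ · a_z · a_{y'}⁻¹ · a_{x'} for all x, y, z, y', x' ∈ D with x ≠ 0, x ≠ y, y ≠ z, and y' − x' = x − y + z. Then G is isomorphic to the cyclic group ℤ/δℤ via the homomorphism sending each generator a_d to d. (This computes the fundamental group of the Singer cyclic triangle δ\T(D), which is cyclic of order δ.) -/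

import Mathlib

/-- `D ⊆ ℤ/δℤ` is a difference set if the difference map `(x, y) ↦ x - y`, restricted to
off-diagonal pairs of elements of `D`, is a bijection onto the nonzero elements of `ℤ/δℤ`. -/
def IsDiffSet {δ : ℕ} (D : Set (ZMod δ)) : Prop :=
  Set.BijOn (fun p : ZMod δ × ZMod δ => p.1 - p.2)
    {p : ZMod δ × ZMod δ | p.1 ∈ D ∧ p.2 ∈ D ∧ p.1 ≠ p.2}
    {n : ZMod δ | n ≠ 0}

/-- The relators of the fundamental group of the Singer cyclic triangle `δ\T(D)`:
generators `a_d` for `d ∈ D`; relators `a_0` and `a_x * a_y⁻¹ * a_z * a_{y'}⁻¹ * a_{x'}`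
for `x, y, z, y', x' ∈ D` with `x ≠ 0`, `x ≠ y`, `y ≠ z` and `y' - x' = x - y + z`. -/
def triangleRels {δ : ℕ} (D : Set (ZMod δ)) : Set (FreeGroup D) :=
  {w : FreeGroup D | ∃ h0 : (0 : ZMod δ) ∈ D, w = FreeGroup.of (⟨0, h0⟩ : D)} ∪
    {w : FreeGroup D | ∃ x y z y' x' : D,
      (x : ZMod δ) ≠ 0 ∧ x ≠ y ∧ y ≠ z ∧
      (y' : ZMod δ) - (x' : ZMod δ) = (x : ZMod δ) - (y : ZMod δ) + (z : ZMod δ) ∧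
      w = FreeGroup.of x * (FreeGroup.of y)⁻¹ * FreeGroup.of z *
            (FreeGroup.of y')⁻¹ * FreeGroup.of x'}

/-- let `q ≥ 2`, `δ = q² + q + 1`, and let `D ⊆ ℤ/δℤ` be a based difference
set of order `q`. The group presented by generators `a_d` (`d ∈ D`) and relators `a_0`
and `a_x * a_y⁻¹ * a_z * a_{y'}⁻¹ * a_{x'}` (for `x, y, z, y', x' ∈ D` with `x ≠ 0`,
`x ≠ y`, `y ≠ z`, `y' - x' = x - y + z`) is isomorphic to the cyclic group `ℤ/δℤ` via the
homomorphism sending each generator `a_d` to `d`. -/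
theorem triangle_aux {δ : ℕ} (D : Set (ZMod δ))
    (h0 : (0 : ZMod δ) ∈ D) (hD : IsDiffSet D) :
    ∃ e : PresentedGroup (triangleRels D) ≃* Multiplicative (ZMod δ),
      ∀ d : D, e (PresentedGroup.of d) = Multiplicative.ofAdd (d : ZMod δ) := by
  classical
  set G := PresentedGroup (triangleRels D) with hG
  set A : D → G := PresentedGroup.of with hA
  -- relators vanish
  have hmk : ∀ r ∈ triangleRels D, PresentedGroup.mk (triangleRels D) r = 1 := fun r hr =>
    (QuotientGroup.eq_one_iff r).mpr (Subgroup.subset_normalClosure hr)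
  have ha0 : A ⟨0, h0⟩ = 1 := hmk _ (Or.inl ⟨h0, rfl⟩)
  have hrel : ∀ x y z y' x' : D, (x : ZMod δ) ≠ 0 → x ≠ y → y ≠ z →
      (y' : ZMod δ) - (x' : ZMod δ) = (x : ZMod δ) - (y : ZMod δ) + (z : ZMod δ) →
      A x * (A y)⁻¹ * A z * (A y')⁻¹ * A x' = 1 := by
    intro x y z y' x' hx0 hxy hyz hs
    have hm := hmk _ (Or.inr ⟨x, y, z, y', x', hx0, hxy, hyz, hs, rfl⟩)
    simpa [map_mul, map_inv, hA, PresentedGroup.of] using hm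
  -- generators commute
  have hcommA : ∀ x y : D, Commute (A x) (A y) := by
    intro x y
    by_cases hx0 : (x : ZMod δ) = 0
    · have : x = ⟨0, h0⟩ := Subtype.ext hx0
      rw [this, ha0]; exact Commute.one_left _
    by_cases hy0 : (y : ZMod δ) = 0
    · have : y = ⟨0, h0⟩ := Subtype.ext hy0
      rw [this, ha0]; exact Commute.one_right _
    by_cases hxy : x = y
    · rw [hxy]
    have h := hrel x y ⟨0, h0⟩ x y hx0 hxy
      (fun h => hy0 (congrArg Subtype.val h)) (by push_cast; ring)
    rw [ha0, mul_one] at h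
    have h1 : A x * (A y)⁻¹ * (A x)⁻¹ = (A y)⁻¹ := mul_eq_one_iff_eq_inv.mp h
    have h2 : A x * (A y)⁻¹ = (A y)⁻¹ * A x := mul_inv_eq_iff_eq_mul.mp h1
    have h3 : Commute (A x) ((A y)⁻¹) := h2
    simpa using h3.inv_right
  -- the chosen difference pair
  have hex : ∀ n : ZMod δ, ∃ p : ZMod δ × ZMod δ, n ≠ 0 →
      (p.1 ∈ D ∧ p.2 ∈ D ∧ p.1 ≠ p.2) ∧ p.1 - p.2 = n := by
    intro n
    by_cases hn : n = 0
    · exact ⟨(0, 0), fun h => absurd hn h⟩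
    · obtain ⟨p, hp, hpe⟩ := hD.surjOn (show n ∈ {n : ZMod δ | n ≠ 0} from hn)
      exact ⟨p, fun _ => ⟨hp, hpe⟩⟩
  choose F hF using hex
  have huniq : ∀ x y : ZMod δ, x ∈ D → y ∈ D → x ≠ y → F (x - y) = (x, y) := by
    intro x y hx hy hxy
    have hne : x - y ≠ 0 := sub_ne_zero.mpr hxy
    obtain ⟨hmem, h4⟩ := hF _ hne
    exact hD.injOn hmem ⟨hx, hy, hxy⟩ h4
  -- the extended generator map and the difference map into G
  set a : ZMod δ → G := fun v => if h : v ∈ D then A ⟨v, h⟩ else 1 with ha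
  have haD : ∀ (v : ZMod δ) (h : v ∈ D), a v = A ⟨v, h⟩ := fun v h => dif_pos h
  have ha0' : a 0 = 1 := by rw [haD 0 h0, ha0]
  have hcomm : ∀ u v : ZMod δ, Commute (a u) (a v) := by
    intro u v
    by_cases hu : u ∈ D
    · by_cases hv : v ∈ D
      · rw [haD u hu, haD v hv]; exact hcommA _ _
      · rw [show a v = 1 from dif_neg hv]; exact Commute.one_right _
    · rw [show a u = 1 from dif_neg hu]; exact Commute.one_left _
  set c : ZMod δ → G := fun n => if n = 0 then 1 else a (F n).1 * (a (F n).2)⁻¹ with hc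
  have hc0 : c 0 = 1 := if_pos rfl
  have hcneg : ∀ n : ZMod δ, n ≠ 0 → c n = a (F n).1 * (a (F n).2)⁻¹ :=
    fun n hn => if_neg hn
  have hcD : ∀ v : ZMod δ, v ∈ D → c v = a v := by
    intro v hv
    by_cases hv0 : v = 0
    · rw [hv0, hc0, ha0']
    · have hFv : F v = (v, 0) := by
        have := huniq v 0 hv h0 hv0
        rwa [sub_zero] at this
      rw [hcneg v hv0, hFv]
      show a v * (a 0)⁻¹ = a v
      rw [ha0', inv_one, mul_one]
  -- the key translation identity
  have key : ∀ (m z : ZMod δ), z ∈ D → c m * a z = c (m + z) := by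
    intro m z hz
    by_cases hz0 : z = 0
    · rw [hz0, ha0', mul_one, add_zero]
    by_cases hm0 : m = 0
    · rw [hm0, hc0, one_mul, zero_add, hcD z hz]
    obtain ⟨⟨hx, hy, hxy⟩, hsub⟩ := hF m hm0
    have hcm : c m = a (F m).1 * (a (F m).2)⁻¹ := if_neg hm0
    by_cases hzy : z = (F m).2
    · have hmz : m + z = (F m).1 := by rw [hzy]; linear_combination -hsub
      rw [hmz, hcD _ hx, hcm, hzy, inv_mul_cancel_right]
    by_cases hx0 : (F m).1 = 0
    · have hmz : m + z = z - (F m).2 := by linear_combination hx0 - hsub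
      have hFz : F (z - (F m).2) = (z, (F m).2) := huniq z (F m).2 hz hy hzy
      have hne : z - (F m).2 ≠ 0 := sub_ne_zero.mpr hzy
      have hax : a (F m).1 = 1 := by rw [hx0, ha0']
      rw [hcm, hax, one_mul, hmz, hcneg _ hne, hFz]
      show (a (F m).2)⁻¹ * a z = a z * (a (F m).2)⁻¹
      exact ((hcomm z (F m).2).inv_right.eq).symm
    · -- main relator case
      by_cases hv : m + z = 0
      · have h := hrel ⟨(F m).1, hx⟩ ⟨(F m).2, hy⟩ ⟨z, hz⟩ ⟨0, h0⟩ ⟨0, h0⟩ hx0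
          (fun h => hxy (congrArg Subtype.val h))
          (fun h => hzy (congrArg Subtype.val h).symm)
          (by push_cast; rw [hsub]; rw [sub_self]; exact hv.symm)
        rw [ha0, inv_one, mul_one, mul_one] at h
        rw [hv, hc0, hcm, haD _ hx, haD _ hy, haD z hz]
        exact h
      · obtain ⟨⟨hp, hm', hne⟩, hsub'⟩ := hF (m + z) hv
        have h := hrel ⟨(F m).1, hx⟩ ⟨(F m).2, hy⟩ ⟨z, hz⟩ ⟨(F (m+z)).1, hp⟩ ⟨(F (m+z)).2, hm'⟩
          hx0 (fun h => hxy (congrArg Subtype.val h))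
          (fun h => hzy (congrArg Subtype.val h).symm)
          (by push_cast; rw [hsub, hsub'])
        have h1 : A ⟨(F m).1, hx⟩ * (A ⟨(F m).2, hy⟩)⁻¹ * A ⟨z, hz⟩ * (A ⟨(F (m+z)).1, hp⟩)⁻¹
            = (A ⟨(F (m+z)).2, hm'⟩)⁻¹ := mul_eq_one_iff_eq_inv.mp h
        have h2 : A ⟨(F m).1, hx⟩ * (A ⟨(F m).2, hy⟩)⁻¹ * A ⟨z, hz⟩
            = (A ⟨(F (m+z)).2, hm'⟩)⁻¹ * A ⟨(F (m+z)).1, hp⟩ := mul_inv_eq_iff_eq_mul.mp h1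
        rw [hcneg _ hv, haD _ hp, haD _ hm', hcm, haD _ hx, haD _ hy, haD z hz, h2]
        exact ((hcommA ⟨(F (m+z)).1, hp⟩ ⟨(F (m+z)).2, hm'⟩).inv_right.eq).symm
  -- additivity of c
  have hadd : ∀ m n : ZMod δ, c (m + n) = c m * c n := by
    intro m n
    by_cases hn : n = 0
    · rw [hn, add_zero, hc0, mul_one]
    obtain ⟨⟨hp, hm', hne⟩, hsub⟩ := hF n hn
    have e1 : c (m - (F n).2) * a (F n).1 = c (m + n) := by
      rw [key _ _ hp]; congr 1; linear_combination hsub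
    have e2 : c (m - (F n).2) * a (F n).2 = c m := by
      rw [key _ _ hm']; congr 1; ring
    have e3 : c (m - (F n).2) = c m * (a (F n).2)⁻¹ := eq_mul_inv_of_mul_eq e2
    rw [← e1, e3, hcneg n hn, mul_assoc]
    congr 1
    exact ((hcomm (F n).2 (F n).1).inv_left.eq)
  -- the lift homomorphism
  have hlift : ∀ r ∈ triangleRels D,
      FreeGroup.lift (fun d : D => Multiplicative.ofAdd (d : ZMod δ)) r = 1 := by
    rintro r (⟨h0', rfl⟩ | ⟨x, y, z, y', x', hx0, hxy, hyz, hsum, rfl⟩)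
    · simp
    · simp only [map_mul, map_inv, FreeGroup.lift_apply_of]
      rw [← ofAdd_neg, ← ofAdd_neg, ← ofAdd_add, ← ofAdd_add, ← ofAdd_add, ← ofAdd_add]
      have : (x : ZMod δ) + -(y : ZMod δ) + (z : ZMod δ) + -(y' : ZMod δ) + (x' : ZMod δ)
          = 0 := by linear_combination -hsum
      rw [this, ofAdd_zero]
  set φ : G →* Multiplicative (ZMod δ) := PresentedGroup.toGroup hlift with hφ
  have hφA : ∀ d : D, φ (A d) = Multiplicative.ofAdd (d : ZMod δ) := fun d =>
    PresentedGroup.toGroup.of hlift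
  set ψ : Multiplicative (ZMod δ) →* G :=
    MonoidHom.mk' (fun n => c (Multiplicative.toAdd n)) (fun x y => hadd _ _) with hψ
  have h1 : ψ.comp φ = MonoidHom.id G := by
    apply PresentedGroup.ext
    intro d
    show ψ (φ (A d)) = A d
    rw [hφA d]
    show c (d : ZMod δ) = A d
    rw [hcD _ d.2, haD _ d.2]
  have h2 : φ.comp ψ = MonoidHom.id (Multiplicative (ZMod δ)) := by
    ext n
    show φ (c (Multiplicative.toAdd n)) = n
    set n' : ZMod δ := Multiplicative.toAdd n with hn'
    by_cases h : n' = 0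
    · rw [h, hc0, map_one]
      have : (n : Multiplicative (ZMod δ)) = Multiplicative.ofAdd (0 : ZMod δ) := by rw [← h, hn']; rfl
      rw [this, ofAdd_zero]
    · obtain ⟨⟨hp, hm', hne⟩, hsub⟩ := hF n' h
      rw [hcneg n' h, map_mul, map_inv, haD _ hp, haD _ hm', hφA, hφA]
      rw [← ofAdd_neg, ← ofAdd_add]
      have hval : ((⟨(F n').1, hp⟩ : D) : ZMod δ) + -((⟨(F n').2, hm'⟩ : D) : ZMod δ) = n' := by
        show (F n').1 + -(F n').2 = n'
        linear_combination hsub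
      rw [hval]
      exact ofAdd_toAdd n
  refine ⟨MonoidHom.toMulEquiv φ ψ h1 h2, fun d => ?_⟩
  show φ (A d) = Multiplicative.ofAdd (d : ZMod δ)
  exact hφA d

theorem triangle_fundamental_group (q : ℕ) (hq : 2 ≤ q)
    (D : Set (ZMod (q ^ 2 + q + 1)))
    (h0 : (0 : ZMod (q ^ 2 + q + 1)) ∈ D) (hcard : D.ncard = q + 1)
    (hD : IsDiffSet D) :
    ∃ e : PresentedGroup (triangleRels D) ≃* Multiplicative (ZMod (q ^ 2 + q + 1)),
      ∀ d : D, e (PresentedGroup.of d) = Multiplicative.ofAdd (d : ZMod (q ^ 2 + q + 1)) := by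
  exact triangle_aux D h0 hD
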